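/- arXiv:2007.06112 — 2 statements merged into one kernel-verified Lean document; each statement's English description precedes it below -/
import Mathlib

section
/- Let X be a 2m-by-2m complex matrix with no eigenvalue on the closed negative real axis (-infinity, 0], and let R be the principal square root of X, i.e. R² = X and every eigenvalue of R has strictly positive real part. If X is self-dual (X^♯ = X), then R is self-dual: R^♯ = R. -/
open Matrix

/-- The matrix `Z = [[0, I], [-I, 0]]` on `ℂ^(m ⊕ m)`. -/
noncomputable def Zmat (m : ℕ) : Matrix (Fin m ⊕ Fin m) (Fin m ⊕ Fin m) ℂ :=
  Matrix.fromBlocks 0 1 (-1) 0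

/-- The dual `X^♯ = -Z Xᵀ Z` of a `2m × 2m` complex matrix. -/
noncomputable def dual {m : ℕ} (X : Matrix (Fin m ⊕ Fin m) (Fin m ⊕ Fin m) ℂ) :
    Matrix (Fin m ⊕ Fin m) (Fin m ⊕ Fin m) ℂ :=
  -(Zmat m * Xᵀ * Zmat m)

section Aux

variable {m : ℕ}

lemma Zmat_mul_Zmat (m : ℕ) : Zmat m * Zmat m = -1 := by
  simp [Zmat, Matrix.fromBlocks_multiply, ← Matrix.fromBlocks_one,
    Matrix.fromBlocks_neg]

lemma Zmat_transpose (m : ℕ) : (Zmat m)ᵀ = -Zmat m := by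
  simp [Zmat, Matrix.fromBlocks_transpose, Matrix.fromBlocks_neg]

lemma dual_one : dual (1 : Matrix (Fin m ⊕ Fin m) (Fin m ⊕ Fin m) ℂ) = 1 := by
  simp [dual, Zmat_mul_Zmat]

lemma dual_mul (A B : Matrix (Fin m ⊕ Fin m) (Fin m ⊕ Fin m) ℂ) :
    dual (A * B) = dual B * dual A := by
  have key : Zmat m * Bᵀ * Zmat m * (Zmat m * Aᵀ * Zmat m)
      = -(Zmat m * (Bᵀ * Aᵀ) * Zmat m) := by
    calc Zmat m * Bᵀ * Zmat m * (Zmat m * Aᵀ * Zmat m)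
        = Zmat m * Bᵀ * (Zmat m * Zmat m) * Aᵀ * Zmat m := by
          simp only [Matrix.mul_assoc]
      _ = -(Zmat m * (Bᵀ * Aᵀ) * Zmat m) := by
          rw [Zmat_mul_Zmat]
          simp only [Matrix.mul_neg, Matrix.neg_mul, Matrix.mul_one, Matrix.mul_assoc]
  unfold dual
  rw [transpose_mul, neg_mul_neg, key]

lemma dual_transpose (A : Matrix (Fin m ⊕ Fin m) (Fin m ⊕ Fin m) ℂ) :
    (dual A)ᵀ = -(Zmat m * A * Zmat m) := by
  unfold dual
  rw [transpose_neg, transpose_mul, transpose_mul, transpose_transpose, Zmat_transpose]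
  simp only [Matrix.neg_mul, Matrix.mul_neg, neg_neg, Matrix.mul_assoc]

lemma dual_dual (A : Matrix (Fin m ⊕ Fin m) (Fin m ⊕ Fin m) ℂ) :
    dual (dual A) = A := by
  show -(Zmat m * (dual A)ᵀ * Zmat m) = A
  rw [dual_transpose]
  calc -(Zmat m * -(Zmat m * A * Zmat m) * Zmat m)
      = Zmat m * Zmat m * A * (Zmat m * Zmat m) := by
        simp only [Matrix.mul_neg, Matrix.neg_mul, neg_neg, Matrix.mul_assoc]
    _ = A := by rw [Zmat_mul_Zmat]; simp

lemma dual_sub (A B : Matrix (Fin m ⊕ Fin m) (Fin m ⊕ Fin m) ℂ) :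
    dual (A - B) = dual A - dual B := by
  simp [dual, transpose_sub, Matrix.sub_mul, Matrix.mul_sub, neg_sub]
  abel

lemma dual_algebraMap (z : ℂ) :
    dual (algebraMap ℂ (Matrix (Fin m ⊕ Fin m) (Fin m ⊕ Fin m) ℂ) z)
      = algebraMap ℂ (Matrix (Fin m ⊕ Fin m) (Fin m ⊕ Fin m) ℂ) z := by
  rw [Algebra.algebraMap_eq_smul_one]
  simp only [dual, transpose_smul, transpose_one, Matrix.mul_smul, Matrix.smul_mul,
    Matrix.mul_one, Zmat_mul_Zmat]
  simp

lemma isUnit_dual {A : Matrix (Fin m ⊕ Fin m) (Fin m ⊕ Fin m) ℂ} :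
    IsUnit (dual A) ↔ IsUnit A := by
  have key : ∀ B : Matrix (Fin m ⊕ Fin m) (Fin m ⊕ Fin m) ℂ,
      IsUnit B → IsUnit (dual B) := by
    intro B hB
    rcases isUnit_iff_exists.mp hB with ⟨C, h1, h2⟩
    exact isUnit_iff_exists.mpr ⟨dual C, by rw [← dual_mul, h2, dual_one],
      by rw [← dual_mul, h1, dual_one]⟩
  constructor
  · intro h
    have := key _ h
    rwa [dual_dual] at this
  · exact key A

lemma eval_charpoly' {n : Type*} [Fintype n] [DecidableEq n]
    (M : Matrix n n ℂ) (μ : ℂ) :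
    (Matrix.charpoly M).eval μ = (Matrix.scalar n μ - M).det := by
  rw [Matrix.charpoly, eval_det, Matrix.matPolyEquiv_charmatrix]
  simp

lemma root_mem_spectrum {n : Type*} [Fintype n] [DecidableEq n]
    (M : Matrix n n ℂ) (μ : ℂ) (h : (Matrix.charpoly M).IsRoot μ) :
    μ ∈ spectrum ℂ M := by
  rw [spectrum.mem_iff]
  intro hu
  have hdet : IsUnit ((algebraMap ℂ (Matrix n n ℂ) μ - M).det) :=
    (Matrix.isUnit_iff_isUnit_det _).mp hu
  have halg : algebraMap ℂ (Matrix n n ℂ) μ = Matrix.scalar n μ := by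
    ext i j
    simp [Matrix.scalar_apply, Matrix.algebraMap_matrix_apply, Matrix.diagonal_apply]
  have : (algebraMap ℂ (Matrix n n ℂ) μ - M).det = 0 := by
    have h2 := eval_charpoly' M μ
    rw [Polynomial.IsRoot.def.mp h] at h2
    rw [halg, ← h2]
  rw [this] at hdet
  exact hdet.ne_zero rfl

lemma aeval_mul_comm {n : Type*} [Fintype n] [DecidableEq n]
    (S T Y : Matrix n n ℂ) (h : S * Y = Y * T) (p : Polynomial ℂ) :
    (Polynomial.aeval S p) * Y = Y * (Polynomial.aeval T p) := by
  induction p using Polynomial.induction_on with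
  | C a =>
      simp only [Polynomial.aeval_C]
      rw [Algebra.algebraMap_eq_smul_one]
      simp [Matrix.smul_mul, Matrix.mul_smul]
  | add p q hp hq =>
      simp only [map_add, Matrix.add_mul, Matrix.mul_add, hp, hq]
  | monomial k a ih =>
      have e1 : Polynomial.C a * Polynomial.X ^ (k + 1)
          = Polynomial.C a * Polynomial.X ^ k * Polynomial.X := by ring
      simp only [e1, _root_.map_mul, Polynomial.aeval_X]
      simp only [_root_.map_mul] at ih
      rw [Matrix.mul_assoc _ S Y, h, ← Matrix.mul_assoc, ih, Matrix.mul_assoc]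

lemma isUnit_aeval_prod_roots {n : Type*} [Fintype n] [DecidableEq n]
    (S : Matrix n n ℂ) (s : Multiset ℂ)
    (h : ∀ μ ∈ s, IsUnit (S - algebraMap ℂ (Matrix n n ℂ) μ)) :
    IsUnit (Polynomial.aeval S (s.map fun μ => Polynomial.X - Polynomial.C μ).prod) := by
  induction s using Multiset.induction_on with
  | empty => simp
  | cons a s ih =>
      rw [Multiset.map_cons, Multiset.prod_cons, _root_.map_mul]
      refine IsUnit.mul ?_ (ih fun μ hμ => h μ (Multiset.mem_cons_of_mem hμ))
      have := h a (Multiset.mem_cons_self a s)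
      simpa using this

end Aux

/-- If `X` is self-dual with no eigenvalue on `(-∞, 0]`, and `R` is its
principal square root, then `R` is self-dual. -/
theorem principal_sqrt_of_selfDual_is_selfDual
    (m : ℕ) (X R : Matrix (Fin m ⊕ Fin m) (Fin m ⊕ Fin m) ℂ)
    (hspec : ∀ z ∈ spectrum ℂ X, ¬ (z.im = 0 ∧ z.re ≤ 0))
    (hsq : R * R = X)
    (hre : ∀ z ∈ spectrum ℂ R, 0 < z.re)
    (hdual : dual X = X) :
    dual R = R := by
  set S := dual R with hS
  -- S is also a square root of X
  have hSS : S * S = X := by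
    rw [hS, ← dual_mul, hsq, hdual]
  -- spectra of S and R coincide
  have hspecS : ∀ z, z ∈ spectrum ℂ S ↔ z ∈ spectrum ℂ R := by
    intro z
    rw [spectrum.mem_iff, spectrum.mem_iff]
    have hzd : algebraMap ℂ _ z - S = dual (algebraMap ℂ _ z - R) := by
      rw [dual_sub, dual_algebraMap]
    rw [hzd, isUnit_dual]
  -- Sylvester relation
  have key : S * (S - R) = (S - R) * (-R) := by
    have h1 : S * S = R * R := by rw [hSS, ← hsq]
    rw [Matrix.mul_sub, Matrix.sub_mul, h1]
    noncomm_ring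
  set p : Polynomial ℂ := Matrix.charpoly (-R) with hp
  have h0 : Polynomial.aeval (-R) p = 0 := Matrix.aeval_self_charpoly _
  have hPY : (Polynomial.aeval S p) * (S - R) = (S - R) * (Polynomial.aeval (-R) p) :=
    aeval_mul_comm S (-R) (S - R) key p
  rw [h0, Matrix.mul_zero] at hPY
  -- aeval S p is a unit
  have hmonic : p.Monic := Matrix.charpoly_monic _
  have hsplit : p = (p.roots.map fun μ => Polynomial.X - Polynomial.C μ).prod :=
    (IsAlgClosed.splits p).eq_prod_roots_of_monic hmonic
  have hunit : IsUnit (Polynomial.aeval S p) := by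
    rw [hsplit]
    refine isUnit_aeval_prod_roots S p.roots ?_
    intro μ hμ
    have hroot : p.IsRoot μ := (Polynomial.mem_roots hmonic.ne_zero).mp hμ
    have hμspec : μ ∈ spectrum ℂ (-R) := root_mem_spectrum (-R) μ hroot
    have hμR : -μ ∈ spectrum ℂ R := by
      rw [← spectrum.neg_eq] at hμspec
      simpa using hμspec
    have hμre : μ.re < 0 := by
      have := hre (-μ) hμR
      simp only [Complex.neg_re] at this
      linarith
    have hnot : μ ∉ spectrum ℂ S := by
      intro hcon
      have := hre μ ((hspecS μ).mp hcon)
      linarith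
    have := spectrum.notMem_iff.mp hnot
    have := this.neg
    simpa [neg_sub] using this
  have hzero : S - R = 0 := by
    have h2 : (Polynomial.aeval S) p * (S - R) = (Polynomial.aeval S) p * 0 := by
      rw [Matrix.mul_zero, hPY]
    exact hunit.mul_left_cancel h2
  exact sub_eq_zero.mp hzero
end

section
/- Let Γ be the 2m-by-2m block matrix diag(I_m, -I_m). Let X be a 2m-by-2m complex matrix with no eigenvalue on the closed negative real axis (-infinity, 0], and let R be the principal square root of X, i.e. R² = X and every eigenvalue of R has strictly positive real part. If Γ X Γ = X†, then Γ R Γ = R†. -/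
open Matrix

/-- The grading `Γ = diag(I_m, -I_m)` on `ℂ^(m ⊕ m)`. -/
noncomputable def Gamma (m : ℕ) : Matrix (Fin m ⊕ Fin m) (Fin m ⊕ Fin m) ℂ :=
  Matrix.fromBlocks 1 0 0 (-1)

section Aux

open Polynomial

variable {n : Type*} [Fintype n] [DecidableEq n]

lemma eval_charpoly_aux (M : Matrix n n ℂ) (z : ℂ) :
    M.charpoly.eval z = (z • (1 : Matrix n n ℂ) - M).det := by
  rw [Matrix.charpoly, ← Polynomial.coe_evalRingHom, RingHom.map_det]
  congr 1
  ext i j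
  by_cases h : i = j
  · subst h
    simp [Matrix.charmatrix_apply_eq, Matrix.one_apply]
  · simp [Matrix.charmatrix_apply_ne _ _ _ h, Matrix.one_apply, h]

lemma mem_spectrum_iff_charpoly (M : Matrix n n ℂ) (z : ℂ) :
    z ∈ spectrum ℂ M ↔ M.charpoly.eval z = 0 := by
  rw [spectrum.mem_iff, Matrix.isUnit_iff_isUnit_det, isUnit_iff_ne_zero, not_not,
    eval_charpoly_aux]
  congr! 2
  rw [Algebra.algebraMap_eq_smul_one]

lemma pow_comm_aux (A C M : Matrix n n ℂ) (h : A * M = M * C) (k : ℕ) :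
    A ^ k * M = M * C ^ k := by
  induction k with
  | zero => simp
  | succ k ih =>
    rw [pow_succ', mul_assoc, ih, ← mul_assoc, h, mul_assoc, ← pow_succ']

lemma aeval_comm_aux (A C M : Matrix n n ℂ) (h : A * M = M * C) (p : ℂ[X]) :
    (aeval A p) * M = M * (aeval C p) := by
  induction p using Polynomial.induction_on' with
  | add p q hp hq => rw [map_add, map_add, add_mul, mul_add, hp, hq]
  | monomial k a =>
    rw [aeval_monomial, aeval_monomial, mul_assoc, pow_comm_aux A C M h k,
      ← mul_assoc, Algebra.commutes, mul_assoc]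

/-- Sylvester-type uniqueness: if `A * M = M * C` and the spectra of `A` and `C`
are disjoint, then `M = 0`. -/
lemma sylvester_aux [Nonempty n] (A C M : Matrix n n ℂ) (h : A * M = M * C)
    (hdisj : ∀ z ∈ spectrum ℂ C, z ∉ spectrum ℂ A) : M = 0 := by
  have hdeg : 0 < (Matrix.charpoly A).degree := by
    rw [Matrix.charpoly_degree_eq_dim]
    exact_mod_cast Fintype.card_pos
  have h1 : M * aeval C A.charpoly = 0 := by
    rw [← aeval_comm_aux A C M h, Matrix.aeval_self_charpoly, zero_mul]
  have hunit : IsUnit (aeval C A.charpoly) := by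
    rw [← spectrum.zero_notMem_iff ℂ,
      spectrum.map_polynomial_aeval_of_degree_pos C A.charpoly hdeg]
    rintro ⟨μ, hμ, h0⟩
    exact hdisj μ hμ ((mem_spectrum_iff_charpoly A μ).2 h0)
  calc M = M * aeval C A.charpoly * ↑hunit.unit⁻¹ := by
        rw [mul_assoc, IsUnit.mul_val_inv, mul_one]
    _ = 0 := by rw [h1, zero_mul]

lemma mem_spectrum_conjTranspose {M : Matrix n n ℂ} {z : ℂ}
    (hz : z ∈ spectrum ℂ Mᴴ) : star z ∈ spectrum ℂ M := by
  rw [spectrum.mem_iff] at hz ⊢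
  intro hu
  apply hz
  have : (algebraMap ℂ (Matrix n n ℂ)) z - Mᴴ = ((algebraMap ℂ (Matrix n n ℂ)) (star z) - M)ᴴ := by
    rw [conjTranspose_sub]
    congr 1
    rw [Algebra.algebraMap_eq_smul_one, Algebra.algebraMap_eq_smul_one,
      Matrix.conjTranspose_smul, conjTranspose_one, star_star]
  rw [this, Matrix.isUnit_iff_isUnit_det, Matrix.det_conjTranspose, isUnit_star,
    ← Matrix.isUnit_iff_isUnit_det]
  exact hu

end Aux

/-- If `X` satisfies the chiral symmetry `Γ X Γ = Xᴴ` with no eigenvalue on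
`(-∞, 0]`, and `R` is its principal square root, then `Γ R Γ = Rᴴ`. -/
theorem principal_sqrt_of_chiral_is_chiral
    (m : ℕ) (X R : Matrix (Fin m ⊕ Fin m) (Fin m ⊕ Fin m) ℂ)
    (hspec : ∀ z ∈ spectrum ℂ X, ¬ (z.im = 0 ∧ z.re ≤ 0))
    (hsq : R * R = X)
    (hre : ∀ z ∈ spectrum ℂ R, 0 < z.re)
    (hchiral : Gamma m * X * Gamma m = Xᴴ) :
    Gamma m * R * Gamma m = Rᴴ := by
  rcases Nat.eq_zero_or_pos m with hm | hm
  · subst hm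
    apply Subsingleton.elim
  have : Nonempty (Fin m ⊕ Fin m) := ⟨Sum.inl ⟨0, hm⟩⟩
  set G := Gamma m with hGdef
  have hG : G * G = 1 := by
    rw [hGdef, Gamma, Matrix.fromBlocks_multiply]
    simp [← Matrix.fromBlocks_one]
  -- the unit given by G
  let Gu : (Matrix (Fin m ⊕ Fin m) (Fin m ⊕ Fin m) ℂ)ˣ := ⟨G, G, hG, hG⟩
  set S := G * Rᴴ * G with hSdef
  have hS2 : S * S = X := by
    have : S * S = G * (R * R)ᴴ * G := by
      rw [hSdef, Matrix.conjTranspose_mul]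
      calc G * Rᴴ * G * (G * Rᴴ * G) = G * (Rᴴ * ((G * G) * Rᴴ)) * G := by
            noncomm_ring
        _ = G * (Rᴴ * Rᴴ) * G := by rw [hG, one_mul]
    rw [this, hsq, ← hchiral]
    calc G * (G * X * G) * G = (G * G) * X * (G * G) := by noncomm_ring
      _ = X := by rw [hG, one_mul, mul_one]
  have hSspec : ∀ z ∈ spectrum ℂ S, 0 < z.re := by
    intro z hz
    have hconj : spectrum ℂ S = spectrum ℂ Rᴴ := by
      have h' := spectrum.units_conjugate (R := ℂ) (a := Rᴴ) (u := Gu)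
      have hval : ((Gu : (Matrix (Fin m ⊕ Fin m) (Fin m ⊕ Fin m) ℂ)ˣ) : Matrix (Fin m ⊕ Fin m) (Fin m ⊕ Fin m) ℂ) = G := rfl
      have hinv : ((Gu⁻¹ : (Matrix (Fin m ⊕ Fin m) (Fin m ⊕ Fin m) ℂ)ˣ) : Matrix (Fin m ⊕ Fin m) (Fin m ⊕ Fin m) ℂ) = G := rfl
      rw [hval, hinv, ← hSdef] at h'
      exact h'
    rw [hconj] at hz
    have := hre (star z) (mem_spectrum_conjTranspose hz)
    simpa using this
  -- Sylvester argument : R * (R - S) = (R - S) * (-S)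
  have hcomm : R * (R - S) = (R - S) * (-S) := by
    have : R * R = S * S := by rw [hsq, hS2]
    rw [mul_sub, sub_mul, this]
    noncomm_ring
  have hdisj : ∀ z ∈ spectrum ℂ (-S), z ∉ spectrum ℂ R := by
    intro z hz hzR
    have h1 : -z ∈ spectrum ℂ S := by
      rw [← spectrum.neg_eq] at hz
      simpa using hz
    have h2 := hSspec (-z) h1
    have h3 := hre z hzR
    simp only [Complex.neg_re] at h2
    linarith
  have hRS : R - S = 0 := sylvester_aux R (-S) (R - S) hcomm hdisj
  have hR : R = S := by rwa [sub_eq_zero] at hRS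
  calc G * R * G = G * (G * Rᴴ * G) * G := by conv_lhs => rw [hR, hSdef]
    _ = (G * G) * Rᴴ * (G * G) := by noncomm_ring
    _ = Rᴴ := by rw [hG, one_mul, mul_one]
end
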